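/- For every integer r ≥ 0, the number of points X ∈ ℤ² with d_pc(O,X) ≤ r equals (10r³ + 9r² + 23r)/12 + ⌈r/2⌉/2 + 1. -/

import Mathlib

def Lp : ℤ × ℤ → ℤ × ℤ := fun p => (-p.1 + 2*p.2 + 1, p.2)
def Lpp : ℤ × ℤ → ℤ × ℤ := fun p => (p.1, 2*p.1 - p.2 + 1)
def Mr : ℤ × ℤ → ℤ × ℤ := fun p => (p.1 + 1, p.2)
def Ml : ℤ × ℤ → ℤ × ℤ := fun p => (p.1 - 1, p.2)
def Mu : ℤ × ℤ → ℤ × ℤ := fun p => (p.1, p.2 + 1)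
def Md : ℤ × ℤ → ℤ × ℤ := fun p => (p.1, p.2 - 1)

def ops : Set ((ℤ × ℤ) → (ℤ × ℤ)) := {Lp, Lpp, Mr, Ml, Mu, Md}

/-- The parabolic-taxicab distance: minimal number of operators from `ops`
needed to map `P` to `Q`. -/
noncomputable def dpc (P Q : ℤ × ℤ) : ℕ :=
  sInf {n | ∃ l : List ((ℤ × ℤ) → (ℤ × ℤ)), l.length = n ∧ (∀ f ∈ l, f ∈ ops) ∧
    l.foldr (fun f p => f p) P = Q}

namespace PTC

def tri (n : ℤ) : ℤ := n * (n + 1) / 2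

lemma two_tri (n : ℤ) : 2 * tri n = n * (n + 1) := by
  obtain ⟨c, hc⟩ := Int.even_mul_succ_self n
  unfold tri; omega

lemma tri_succ (n : ℤ) : tri (n + 1) = tri n + (n + 1) := by
  have h1 := two_tri n; have h2 := two_tri (n + 1); nlinarith

lemma tri_nonneg {n : ℤ} (h : 0 ≤ n) : 0 ≤ tri n := by
  have := two_tri n; nlinarith

lemma tri_ge_self {n : ℤ} (h : 0 ≤ n) : n ≤ tri n := by
  rcases h.eq_or_lt with h0 | h1
  · simp [← h0, tri]
  · have := two_tri n; nlinarith

lemma tri_mono {a b : ℤ} (ha : 0 ≤ a) (h : a ≤ b) : tri a ≤ tri b := by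
  have h1 := two_tri a; have h2 := two_tri b; nlinarith

/-- ball membership in (h,g) coordinates -/
def inCh (r h g : ℤ) : Prop :=
  |h| ≤ r ∧ g ≤ 2 * tri ((r + |h|) / 2) ∧
    -(2 * (tri ((r - |h|) / 2) + |h| * ((r - |h|) / 2))) ≤ g

lemma inCh_neg {r h g : ℤ} (H : inCh r h g) : inCh r (-h) g := by
  simpa [inCh, abs_neg] using H

lemma inCh_mono {r h g : ℤ} (H : inCh r h g) : inCh (r + 1) h g := by
  simp only [inCh] at H ⊢
  obtain ⟨h1, h2, h3⟩ := H
  have ha : (0:ℤ) ≤ |h| := abs_nonneg h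
  set a := |h| with hav
  set m := (r + a) / 2 with hm
  set k := (r - a) / 2 with hk
  refine ⟨by omega, ?_, ?_⟩
  · have hle : m ≤ (r + 1 + a) / 2 := by omega
    have := tri_mono (by omega : (0:ℤ) ≤ m) hle
    omega
  · have hkk : k ≤ (r + 1 - a) / 2 := by omega
    have t1 := tri_mono (by omega : (0:ℤ) ≤ k) hkk
    have t2 : a * k ≤ a * ((r + 1 - a) / 2) := mul_le_mul_of_nonneg_left hkk ha
    omega

lemma tri_zero : tri 0 = 0 := by simp [tri]

lemma inCh_zero {h g : ℤ} : inCh 0 h g ↔ h = 0 ∧ g = 0 := by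
  constructor
  · rintro ⟨h1, h2, h3⟩
    have hz : h = 0 := by have := abs_le.mp h1; omega
    subst hz
    simp only [abs_zero, add_zero, zero_mul, sub_zero] at h2 h3
    norm_num [tri_zero] at h2 h3
    exact ⟨rfl, by omega⟩
  · rintro ⟨rfl, rfl⟩
    refine ⟨by simp, ?_, ?_⟩ <;> simp [tri_zero]

lemma stepMr {r h g : ℤ} (H : inCh r h g) : inCh (r + 1) (h + 1) (g + 2 * h) := by
  simp only [inCh] at H ⊢
  obtain ⟨h1, h2, h3⟩ := H
  rcases le_or_gt 0 h with hs | hs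
  · -- h ≥ 0, |h| = h, |h+1| = h+1
    rw [abs_of_nonneg hs] at h1 h2 h3
    rw [abs_of_nonneg (by omega : (0:ℤ) ≤ h + 1)]
    set m := (r + h) / 2 with hm
    set k := (r - h) / 2 with hk
    have e1 : (r + 1 + (h + 1)) / 2 = m + 1 := by omega
    have e2 : (r + 1 - (h + 1)) / 2 = k := by omega
    rw [e1, e2]
    have hm0 : h ≤ m := by omega
    have hk0 : (0:ℤ) ≤ k := by omega
    have t1 := two_tri m; have t2 := two_tri (m + 1)
    refine ⟨by omega, by nlinarith, by nlinarith⟩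
  · -- h ≤ -1, |h| = -h, |h+1| = -(h+1)
    rw [abs_of_neg hs] at h1 h2 h3
    rw [abs_of_nonpos (by omega : h + 1 ≤ 0)]
    set m := (r + -h) / 2 with hm
    set k := (r - -h) / 2 with hk
    have e1 : (r + 1 + -(h + 1)) / 2 = m := by omega
    have e2 : (r + 1 - -(h + 1)) / 2 = k + 1 := by omega
    rw [e1, e2]
    have t1 := two_tri k; have t2 := two_tri (k + 1)
    refine ⟨by omega, by omega, by nlinarith⟩

lemma stepMd {r h g : ℤ} (H : inCh r h g) : inCh (r + 1) (h + 1) (g + 2 * h + 2) := by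
  simp only [inCh] at H ⊢
  obtain ⟨h1, h2, h3⟩ := H
  rcases le_or_gt 0 h with hs | hs
  · rw [abs_of_nonneg hs] at h1 h2 h3
    rw [abs_of_nonneg (by omega : (0:ℤ) ≤ h + 1)]
    set m := (r + h) / 2 with hm
    set k := (r - h) / 2 with hk
    have e1 : (r + 1 + (h + 1)) / 2 = m + 1 := by omega
    have e2 : (r + 1 - (h + 1)) / 2 = k := by omega
    rw [e1, e2]
    have hm0 : h ≤ m := by omega
    have hk0 : (0:ℤ) ≤ k := by omega
    have t1 := two_tri m; have t2 := two_tri (m + 1)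
    refine ⟨by omega, by nlinarith, by nlinarith⟩
  · rw [abs_of_neg hs] at h1 h2 h3
    rw [abs_of_nonpos (by omega : h + 1 ≤ 0)]
    set m := (r + -h) / 2 with hm
    set k := (r - -h) / 2 with hk
    have e1 : (r + 1 + -(h + 1)) / 2 = m := by omega
    have e2 : (r + 1 - -(h + 1)) / 2 = k + 1 := by omega
    rw [e1, e2]
    have t1 := two_tri k; have t2 := two_tri (k + 1)
    refine ⟨by omega, by omega, by nlinarith⟩

lemma stepLp {r h g : ℤ} (H : inCh r h g) : inCh (r + 1) (1 - h) g := by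
  simp only [inCh] at H ⊢
  obtain ⟨h1, h2, h3⟩ := H
  rcases le_or_gt 1 h with hs | hs
  · -- h ≥ 1: |1-h| = h-1
    rw [abs_of_nonneg (by omega : (0:ℤ) ≤ h)] at h1 h2 h3
    rw [abs_of_nonpos (by omega : 1 - h ≤ 0)]
    set m := (r + h) / 2 with hm
    set k := (r - h) / 2 with hk
    have e1 : (r + 1 + -(1 - h)) / 2 = m := by omega
    have e2 : (r + 1 - -(1 - h)) / 2 = k + 1 := by omega
    rw [e1, e2]
    have hk0 : (0:ℤ) ≤ k := by omega
    have t1 := two_tri k; have t2 := two_tri (k + 1)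
    refine ⟨by omega, by omega, by nlinarith⟩
  · -- h ≤ 0: |1-h| = 1-h
    rw [abs_of_nonpos (by omega : h ≤ 0)] at h1 h2 h3
    rw [abs_of_nonneg (by omega : (0:ℤ) ≤ 1 - h)]
    set m := (r + -h) / 2 with hm
    set k := (r - -h) / 2 with hk
    have e1 : (r + 1 + (1 - h)) / 2 = m + 1 := by omega
    have e2 : (r + 1 - (1 - h)) / 2 = k := by omega
    rw [e1, e2]
    have hk0 : (0:ℤ) ≤ k := by omega
    have hmono := tri_mono (by omega : (0:ℤ) ≤ m) (by omega : m ≤ m + 1)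
    refine ⟨by omega, by omega, by nlinarith⟩

lemma stepMu {r h g : ℤ} (H : inCh r h g) : inCh (r + 1) (h - 1) (g - 2 * h) := by
  have := inCh_neg (stepMr (inCh_neg H))
  have e : -(-h + 1) = h - 1 := by ring
  rw [e] at this
  have e2 : g + 2 * -h = g - 2 * h := by ring
  rwa [e2] at this

lemma stepMl {r h g : ℤ} (H : inCh r h g) : inCh (r + 1) (h - 1) (g - 2 * h + 2) := by
  have := inCh_neg (stepMd (inCh_neg H))
  have e : -(-h + 1) = h - 1 := by ring
  rw [e] at this
  have e2 : g + 2 * -h + 2 = g - 2 * h + 2 := by ring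
  rwa [e2] at this

lemma stepLpp {r h g : ℤ} (H : inCh r h g) : inCh (r + 1) (-1 - h) g := by
  have := inCh_neg (stepLp (inCh_neg H))
  have e : -(1 - -h) = -1 - h := by ring
  rwa [e] at this

lemma backAux {r h g : ℤ} (hr : 0 ≤ r) (hh : 0 ≤ h) (hg : 2 ∣ g) (H : inCh (r+1) h g) :
    inCh r h g ∨ inCh r (1-h) g ∨ inCh r (-1-h) g ∨ inCh r (h+1) (g+2*h+2) ∨
      inCh r (h-1) (g-2*h+2) ∨ inCh r (h-1) (g-2*h) ∨ inCh r (h+1) (g+2*h) := by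
  simp only [inCh] at H
  obtain ⟨h1, h2, h3⟩ := H
  rw [abs_of_nonneg hh] at h1 h2 h3
  by_cases hside : h = r + 1
  · subst hside
    have eK : (r + 1 - (r + 1)) / 2 = 0 := by omega
    have eM : (r + 1 + (r + 1)) / 2 = r + 1 := by omega
    rw [eK, tri_zero] at h3
    rw [eM] at h2
    have hg0 : 0 ≤ g := by simpa using h3
    have t1 := two_tri r
    have t2 := two_tri (r + 1)
    by_cases hg2 : g ≤ r * (r + 1)
    · -- use Lp X  : (1 - h, g)
      right; left
      simp only [inCh]
      have e0 : (1 : ℤ) - (r + 1) = -r := by ring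
      rw [e0, abs_of_nonpos (by omega : -r ≤ 0)]
      have e1 : (r + - -r) / 2 = r := by omega
      have e2 : (r - - -r) / 2 = 0 := by omega
      rw [e1, e2, tri_zero]
      refine ⟨by omega, by omega, by simpa using hg0⟩
    · -- g ≥ r(r+1)+2 : use Mu X : (h-1, g-2h)
      right; right; right; right; right; left
      simp only [inCh]
      have e0 : (r : ℤ) + 1 - 1 = r := by ring
      rw [e0, abs_of_nonneg hr]
      have e1 : (r + r) / 2 = r := by omega
      have e2 : (r - r) / 2 = 0 := by omega
      rw [e1, e2, tri_zero]
      have hge : r * (r + 1) + 2 ≤ g := by omega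
      have h6 : 2 * r - 1 ≤ r * (r + 1) := by nlinarith [sq_nonneg (r - 1)]
      refine ⟨by omega, by nlinarith, by omega⟩
  · have hhr : h ≤ r := by omega
    set M := (r + 1 + h) / 2 with hM
    set K := (r + 1 - h) / 2 with hK
    by_cases htop : 2 * M = r + 1 + h ∧ 2 * tri (M - 1) < g
    · -- top: use Lpp X : (-1 - h, g)
      right; right; left
      simp only [inCh]
      have hr1 : h + 1 ≤ r := by omega
      rw [abs_of_nonpos (by omega : -1 - h ≤ 0)]
      have e0 : -(-1 - h) = h + 1 := by ring
      rw [e0]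
      have e1 : (r + (h + 1)) / 2 = M := by omega
      rw [e1]
      have hM1 : (0:ℤ) ≤ M - 1 := by omega
      have hKp : (0:ℤ) ≤ (r - (h + 1)) / 2 := by omega
      have p1 : (0:ℤ) ≤ tri ((r - (h + 1)) / 2) := tri_nonneg hKp
      have p2 : (0:ℤ) ≤ (h + 1) * ((r - (h + 1)) / 2) := mul_nonneg (by omega) hKp
      have p3 : (0:ℤ) ≤ tri (M - 1) := tri_nonneg hM1
      exact ⟨by omega, h2, by omega⟩
    · by_cases hbot : 2 * K = r + 1 - h ∧ g < -(2 * (tri (K-1) + h * (K-1)))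
      · -- bot: use Md X : (h+1, g+2h+2)
        obtain ⟨hb1, hb2⟩ := hbot
        have hK1 : 1 ≤ K := by omega
        right; right; right; left
        simp only [inCh]
        have hr1 : h + 1 ≤ r := by omega
        rw [abs_of_nonneg (by omega : (0:ℤ) ≤ h + 1)]
        set M' := (r + (h + 1)) / 2 with hM'
        have e1 : (r - (h + 1)) / 2 = K - 1 := by omega
        rw [e1]
        have hM'h : h ≤ M' := by omega
        have hM'0 : (0:ℤ) ≤ M' := by omega
        have p1 : (0:ℤ) ≤ tri (K - 1) := tri_nonneg (by omega)
        have p2 : (0:ℤ) ≤ h * (K - 1) := mul_nonneg hh (by omega)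
        have hgle : g ≤ -2 := by omega
        have p3 := tri_ge_self hM'0
        have ts : tri K = tri (K - 1) + K := by
          have := tri_succ (K - 1); simpa using this
        rw [ts] at h3
        refine ⟨by omega, by nlinarith, by nlinarith⟩
      · -- in C r already
        left
        simp only [inCh]
        rw [abs_of_nonneg hh]
        refine ⟨hhr, ?_, ?_⟩
        · rcases le_or_gt (2 * M) (r + h) with hc | hc
          · have e1 : (r + h) / 2 = M := by omega
            rw [e1]; exact h2
          · have he : 2 * M = r + 1 + h := by omega
            have hle : g ≤ 2 * tri (M - 1) := by
              rcases not_and_or.mp htop with hx | hx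
              · exact absurd he hx
              · omega
            have e1 : (r + h) / 2 = M - 1 := by omega
            rw [e1]; exact hle
        · rcases le_or_gt (2 * K) (r - h) with hc | hc
          · have e1 : (r - h) / 2 = K := by omega
            rw [e1]; exact h3
          · have he : 2 * K = r + 1 - h := by omega
            have hle : -(2 * (tri (K-1) + h * (K-1))) ≤ g := by
              rcases not_and_or.mp hbot with hx | hx
              · exact absurd he hx
              · omega
            have e1 : (r - h) / 2 = K - 1 := by omega
            rw [e1]; exact hle

lemma back {r h g : ℤ} (hr : 0 ≤ r) (hg : 2 ∣ g) (H : inCh (r+1) h g) :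
    inCh r h g ∨ inCh r (1-h) g ∨ inCh r (-1-h) g ∨ inCh r (h+1) (g+2*h+2) ∨
      inCh r (h-1) (g-2*h+2) ∨ inCh r (h-1) (g-2*h) ∨ inCh r (h+1) (g+2*h) := by
  rcases le_or_gt 0 h with hh | hh
  · exact backAux hr hh hg H
  · have H' := inCh_neg H
    have := backAux hr (by omega : (0:ℤ) ≤ -h) hg H'
    rcases this with c1 | c2 | c3 | c4 | c5 | c6 | c7
    · exact Or.inl (by simpa using inCh_neg c1)
    · right; right; left
      have := inCh_neg c2
      have e : -(1 - -h) = -1 - h := by ring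
      rwa [e] at this
    · right; left
      have := inCh_neg c3
      have e : -(-1 - -h) = 1 - h := by ring
      rwa [e] at this
    · right; right; right; right; left
      have := inCh_neg c4
      have e : -(-h + 1) = h - 1 := by ring
      have e2 : g + 2 * -h + 2 = g - 2 * h + 2 := by ring
      rwa [e, e2] at this
    · right; right; right; left
      have := inCh_neg c5
      have e : -(-h - 1) = h + 1 := by ring
      have e2 : g - 2 * -h + 2 = g + 2 * h + 2 := by ring
      rwa [e, e2] at this
    · right; right; right; right; right; right
      have := inCh_neg c6
      have e : -(-h - 1) = h + 1 := by ring
      have e2 : g - 2 * -h = g + 2 * h := by ring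
      rwa [e, e2] at this
    · right; right; right; right; right; left
      have := inCh_neg c7
      have e : -(-h + 1) = h - 1 := by ring
      have e2 : g + 2 * -h = g - 2 * h := by ring
      rwa [e, e2] at this



def hOf (p : ℤ × ℤ) : ℤ := p.1 - p.2
def gOf (p : ℤ × ℤ) : ℤ := (p.1 - p.2)^2 - p.1 - p.2

def Cset (r : ℕ) : Set (ℤ × ℤ) := {p | inCh r (hOf p) (gOf p)}

lemma gOf_even (p : ℤ × ℤ) : 2 ∣ gOf p := by
  obtain ⟨x, y⟩ := p
  obtain ⟨c, hc⟩ := Int.even_mul_succ_self (x - y - 1)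
  simp only [gOf]
  have : (x - y)^2 - x - y = (x - y - 1) * (x - y - 1 + 1) - 2 * y := by ring
  omega

/-- reach n X : X reachable from origin in exactly n steps -/
def reach (n : ℕ) (X : ℤ × ℤ) : Prop :=
  ∃ l : List ((ℤ × ℤ) → (ℤ × ℤ)), l.length = n ∧ (∀ f ∈ l, f ∈ ops) ∧
    l.foldr (fun f p => f p) (0, 0) = X

lemma reach_zero {X : ℤ × ℤ} : reach 0 X ↔ X = (0, 0) := by
  constructor
  · rintro ⟨l, hl, -, hf⟩
    rw [List.length_eq_zero_iff] at hl
    subst hl; simpa using hf.symm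
  · rintro rfl; exact ⟨[], rfl, by simp, rfl⟩

lemma reach_succ {n : ℕ} {X : ℤ × ℤ} :
    reach (n + 1) X ↔ ∃ f ∈ ops, ∃ Y, reach n Y ∧ f Y = X := by
  constructor
  · rintro ⟨l, hl, hops, hf⟩
    cases l with
    | nil => simp at hl
    | cons f l =>
      refine ⟨f, hops f (by simp), l.foldr (fun f p => f p) (0,0), ⟨l, by simpa using hl,
        fun g hg => hops g (by simp [hg]), rfl⟩, by simpa using hf⟩
  · rintro ⟨f, hf, Y, ⟨l, hl, hops, hfold⟩, rfl⟩
    exact ⟨f :: l, by simp [hl], by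
      intro g hg
      rcases List.mem_cons.mp hg with rfl | hg
      · exact hf
      · exact hops g hg, by simp only [List.foldr_cons]; rw [hfold]⟩

lemma mu_mem : Mu ∈ ops := by simp [ops]
lemma md_mem : Md ∈ ops := by simp [ops]
lemma mr_mem : Mr ∈ ops := by simp [ops]
lemma ml_mem : Ml ∈ ops := by simp [ops]
lemma lp_mem : Lp ∈ ops := by simp [ops]
lemma lpp_mem : Lpp ∈ ops := by simp [ops]

lemma reach_total (X : ℤ × ℤ) : ∃ n, reach n X := by
  obtain ⟨x, y⟩ := X
  have vert : ∀ y : ℤ, ∃ n, reach n (0, y) := by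
    intro y
    induction y using Int.induction_on with
    | zero => exact ⟨0, reach_zero.mpr rfl⟩
    | succ i ih =>
      obtain ⟨n, hn⟩ := ih
      exact ⟨n + 1, reach_succ.mpr ⟨Mu, mu_mem, (0, i), hn, by simp [Mu, Prod.ext_iff] <;> omega⟩⟩
    | pred i ih =>
      obtain ⟨n, hn⟩ := ih
      exact ⟨n + 1, reach_succ.mpr ⟨Md, md_mem, (0, -i), hn, by simp [Md, Prod.ext_iff] <;> omega⟩⟩
  induction x using Int.induction_on with
  | zero => exact vert y
  | succ i ih =>
    obtain ⟨n, hn⟩ := ih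
    exact ⟨n + 1, reach_succ.mpr ⟨Mr, mr_mem, (i, y), hn, by simp [Mr, Prod.ext_iff] <;> omega⟩⟩
  | pred i ih =>
    obtain ⟨n, hn⟩ := ih
    exact ⟨n + 1, reach_succ.mpr ⟨Ml, ml_mem, (-i, y), hn, by simp [Ml, Prod.ext_iff] <;> omega⟩⟩

lemma dpc_le_iff {r : ℕ} {X : ℤ × ℤ} : dpc (0, 0) X ≤ r ↔ ∃ n ≤ r, reach n X := by
  have hset : {n | ∃ l : List ((ℤ × ℤ) → (ℤ × ℤ)), l.length = n ∧ (∀ f ∈ l, f ∈ ops) ∧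
      l.foldr (fun f p => f p) (0, 0) = X} = {n | reach n X} := rfl
  constructor
  · intro hle
    have hne : {n | reach n X}.Nonempty := reach_total X
    have := Nat.sInf_mem hne
    exact ⟨_, by rw [dpc, hset] at hle; exact hle, this⟩
  · rintro ⟨n, hn, hr⟩
    rw [dpc, hset]
    exact le_trans (Nat.sInf_le hr) hn

lemma ball_succ {r : ℕ} {X : ℤ × ℤ} :
    dpc (0, 0) X ≤ r + 1 ↔ dpc (0, 0) X ≤ r ∨ ∃ f ∈ ops, ∃ Y, dpc (0, 0) Y ≤ r ∧ f Y = X := by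
  constructor
  · intro hle
    obtain ⟨n, hn, hr⟩ := dpc_le_iff.mp hle
    rcases Nat.lt_or_ge n (r + 1) with h | h
    · exact Or.inl (dpc_le_iff.mpr ⟨n, by omega, hr⟩)
    · have : n = r + 1 := by omega
      subst this
      obtain ⟨f, hf, Y, hY, he⟩ := reach_succ.mp hr
      exact Or.inr ⟨f, hf, Y, dpc_le_iff.mpr ⟨r, le_rfl, hY⟩, he⟩
  · rintro (h | ⟨f, hf, Y, hY, rfl⟩)
    · exact le_trans h (by omega)
    · obtain ⟨n, hn, hr⟩ := dpc_le_iff.mp hY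
      exact dpc_le_iff.mpr ⟨n + 1, by omega, reach_succ.mpr ⟨f, hf, Y, hr, rfl⟩⟩

lemma cset_mono {r : ℕ} {p : ℤ × ℤ} (hp : p ∈ Cset r) : p ∈ Cset (r + 1) := by
  have hps : inCh r (hOf p) (gOf p) := hp
  have hcast : ((r + 1 : ℕ) : ℤ) = (r : ℤ) + 1 := by push_cast; ring
  show inCh ((r+1 : ℕ) : ℤ) (hOf p) (gOf p)
  rw [hcast]
  exact inCh_mono hps

lemma cset_step {r : ℕ} {p : ℤ × ℤ} (hp : p ∈ Cset r) {f} (hf : f ∈ ops) :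
    f p ∈ Cset (r + 1) := by
  have hps : inCh r (hOf p) (gOf p) := hp
  have hcast : ((r + 1 : ℕ) : ℤ) = (r : ℤ) + 1 := by push_cast; ring
  simp only [Cset, Set.mem_setOf_eq, hcast]
  simp only [ops, Set.mem_insert_iff, Set.mem_singleton_iff] at hf
  obtain ⟨x, y⟩ := p
  rcases hf with rfl | rfl | rfl | rfl | rfl | rfl
  · have e1 : hOf (Lp (x, y)) = 1 - hOf (x, y) := by simp [Lp, hOf]; ring
    have e2 : gOf (Lp (x, y)) = gOf (x, y) := by simp [Lp, gOf, hOf]; ring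
    rw [e1, e2]; exact stepLp hps
  · have e1 : hOf (Lpp (x, y)) = -1 - hOf (x, y) := by simp [Lpp, hOf]; ring
    have e2 : gOf (Lpp (x, y)) = gOf (x, y) := by simp [Lpp, gOf, hOf]; ring
    rw [e1, e2]; exact stepLpp hps
  · have e1 : hOf (Mr (x, y)) = hOf (x, y) + 1 := by simp [Mr, hOf]; ring
    have e2 : gOf (Mr (x, y)) = gOf (x, y) + 2 * hOf (x, y) := by simp [Mr, gOf, hOf]; ring
    rw [e1, e2]; exact stepMr hps
  · have e1 : hOf (Ml (x, y)) = hOf (x, y) - 1 := by simp [Ml, hOf]; ring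
    have e2 : gOf (Ml (x, y)) = gOf (x, y) - 2 * hOf (x, y) + 2 := by simp [Ml, gOf, hOf]; ring
    rw [e1, e2]; exact stepMl hps
  · have e1 : hOf (Mu (x, y)) = hOf (x, y) - 1 := by simp [Mu, hOf]; ring
    have e2 : gOf (Mu (x, y)) = gOf (x, y) - 2 * hOf (x, y) := by simp [Mu, gOf, hOf]; ring
    rw [e1, e2]; exact stepMu hps
  · have e1 : hOf (Md (x, y)) = hOf (x, y) + 1 := by simp [Md, hOf]; ring
    have e2 : gOf (Md (x, y)) = gOf (x, y) + 2 * hOf (x, y) + 2 := by simp [Md, gOf, hOf]; ring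
    rw [e1, e2]; exact stepMd hps

lemma cset_back {r : ℕ} {X : ℤ × ℤ} (hX : X ∈ Cset (r + 1)) :
    X ∈ Cset r ∨ ∃ f ∈ ops, ∃ Y ∈ Cset r, f Y = X := by
  have hcast : ((r + 1 : ℕ) : ℤ) = (r : ℤ) + 1 := by push_cast; ring
  have hX' : inCh ((r : ℤ) + 1) (hOf X) (gOf X) := by rw [← hcast]; exact hX
  obtain ⟨x, y⟩ := X
  rcases back (by positivity) (gOf_even (x, y)) hX' with c | c | c | c | c | c | c
  · exact Or.inl c
  · -- Y = Lp X, f = Lp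
    refine Or.inr ⟨Lp, lp_mem, Lp (x, y), ?_, ?_⟩
    · have e1 : hOf (Lp (x, y)) = 1 - hOf (x, y) := by simp [Lp, hOf]; ring
      have e2 : gOf (Lp (x, y)) = gOf (x, y) := by simp [Lp, gOf, hOf]; ring
      show inCh r (hOf (Lp (x,y))) (gOf (Lp (x,y)))
      rw [e1, e2]; exact c
    · simp [Lp, Prod.ext_iff] <;> ring
  · refine Or.inr ⟨Lpp, lpp_mem, Lpp (x, y), ?_, ?_⟩
    · have e1 : hOf (Lpp (x, y)) = -1 - hOf (x, y) := by simp [Lpp, hOf]; ring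
      have e2 : gOf (Lpp (x, y)) = gOf (x, y) := by simp [Lpp, gOf, hOf]; ring
      show inCh r (hOf (Lpp (x,y))) (gOf (Lpp (x,y)))
      rw [e1, e2]; exact c
    · simp [Lpp, Prod.ext_iff] <;> ring
  · -- Y = Md X, f = Mu
    refine Or.inr ⟨Mu, mu_mem, Md (x, y), ?_, ?_⟩
    · have e1 : hOf (Md (x, y)) = hOf (x, y) + 1 := by simp [Md, hOf]; ring
      have e2 : gOf (Md (x, y)) = gOf (x, y) + 2 * hOf (x, y) + 2 := by simp [Md, gOf, hOf]; ring
      show inCh r (hOf (Md (x,y))) (gOf (Md (x,y)))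
      rw [e1, e2]; exact c
    · simp [Mu, Md, Prod.ext_iff]
  · refine Or.inr ⟨Mr, mr_mem, Ml (x, y), ?_, ?_⟩
    · have e1 : hOf (Ml (x, y)) = hOf (x, y) - 1 := by simp [Ml, hOf]; ring
      have e2 : gOf (Ml (x, y)) = gOf (x, y) - 2 * hOf (x, y) + 2 := by simp [Ml, gOf, hOf]; ring
      show inCh r (hOf (Ml (x,y))) (gOf (Ml (x,y)))
      rw [e1, e2]; exact c
    · simp [Mr, Ml, Prod.ext_iff]
  · refine Or.inr ⟨Md, md_mem, Mu (x, y), ?_, ?_⟩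
    · have e1 : hOf (Mu (x, y)) = hOf (x, y) - 1 := by simp [Mu, hOf]; ring
      have e2 : gOf (Mu (x, y)) = gOf (x, y) - 2 * hOf (x, y) := by simp [Mu, gOf, hOf]; ring
      show inCh r (hOf (Mu (x,y))) (gOf (Mu (x,y)))
      rw [e1, e2]; exact c
    · simp [Md, Mu, Prod.ext_iff]
  · refine Or.inr ⟨Ml, ml_mem, Mr (x, y), ?_, ?_⟩
    · have e1 : hOf (Mr (x, y)) = hOf (x, y) + 1 := by simp [Mr, hOf]; ring
      have e2 : gOf (Mr (x, y)) = gOf (x, y) + 2 * hOf (x, y) := by simp [Mr, gOf, hOf]; ring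
      show inCh r (hOf (Mr (x,y))) (gOf (Mr (x,y)))
      rw [e1, e2]; exact c
    · simp [Ml, Mr, Prod.ext_iff]

theorem ball_eq_cset (r : ℕ) : {X : ℤ × ℤ | dpc (0, 0) X ≤ r} = Cset r := by
  induction r with
  | zero =>
    ext X
    simp only [Set.mem_setOf_eq, Nat.le_zero]
    constructor
    · intro hle
      have h0 : dpc (0,0) X ≤ 0 := le_of_eq hle
      obtain ⟨n, hn, hr⟩ := dpc_le_iff.mp h0
      have : n = 0 := by omega
      subst this
      have := reach_zero.mp hr
      subst this
      show inCh 0 (hOf (0,0)) (gOf (0,0))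
      rw [inCh_zero]
      constructor <;> simp [hOf, gOf]
    · intro hX
      have hX' : inCh 0 (hOf X) (gOf X) := by
        have : ((0 : ℕ) : ℤ) = (0 : ℤ) := rfl
        exact hX
      rw [inCh_zero] at hX'
      obtain ⟨h0, g0⟩ := hX'
      obtain ⟨x, y⟩ := X
      simp [hOf] at h0
      simp [gOf] at g0
      have hx : x = 0 := by
        have : x = y := by omega
        subst this; nlinarith [g0]
      have hy : y = 0 := by omega
      subst hx; subst hy
      have : dpc (0,0) ((0:ℤ),(0:ℤ)) ≤ 0 := dpc_le_iff.mpr ⟨0, le_rfl, reach_zero.mpr rfl⟩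
      omega
  | succ r ih =>
    ext X
    simp only [Set.mem_setOf_eq]
    rw [ball_succ]
    constructor
    · rintro (h | ⟨f, hf, Y, hY, rfl⟩)
      · have hc : X ∈ Cset r := (Set.ext_iff.mp ih X).mp h
        exact cset_mono hc
      · have : Y ∈ Cset r := (Set.ext_iff.mp ih Y).mp hY
        exact cset_step this hf
    · intro hX
      rcases cset_back hX with h | ⟨f, hf, Y, hY, he⟩
      · exact Or.inl ((Set.ext_iff.mp ih X).mpr h)
      · exact Or.inr ⟨f, hf, Y, (Set.ext_iff.mp ih Y).mpr hY, he⟩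

def ghi (r : ℕ) (h : ℤ) : ℤ := tri (((r : ℤ) + |h|) / 2)
def glo (r : ℕ) (h : ℤ) : ℤ := -(tri (((r : ℤ) - |h|) / 2) + |h| * (((r : ℤ) - |h|) / 2))
def psi (h G : ℤ) : ℤ × ℤ := (h * (h + 1) / 2 - G, h * (h + 1) / 2 - G - h)
def row (r : ℕ) (h : ℤ) : ℤ := ghi r h - glo r h + 1
noncomputable def Fs (r : ℕ) : Finset (ℤ × ℤ) :=
  (Finset.Icc (-(r : ℤ)) (r : ℤ)).biUnion (fun h => (Finset.Icc (glo r h) (ghi r h)).image (psi h))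

lemma hh2 (h : ℤ) : 2 * (h * (h + 1) / 2) = h * (h + 1) := by
  obtain ⟨c, hc⟩ := Int.even_mul_succ_self h; omega

lemma psi_hOf (h G : ℤ) : hOf (psi h G) = h := by simp [psi, hOf]

lemma psi_gOf (h G : ℤ) : gOf (psi h G) = 2 * G := by
  have e := hh2 h
  simp only [psi, gOf]
  have e1 : (h * (h + 1) / 2 - G) - (h * (h + 1) / 2 - G - h) = h := by ring
  rw [e1]
  linear_combination -e

lemma psi_inj (h : ℤ) : Function.Injective (psi h) := by
  intro G1 G2 he
  simp only [psi, Prod.mk.injEq] at he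
  omega

lemma cset_eq_Fs (r : ℕ) : Cset r = ↑(Fs r) := by
  ext p
  simp only [Fs, Finset.coe_biUnion, Set.mem_iUnion, Finset.mem_coe, Finset.mem_image,
    Finset.mem_Icc, Cset, Set.mem_setOf_eq]
  constructor
  · intro hp
    obtain ⟨h1, h2, h3⟩ := hp
    refine ⟨hOf p, ⟨?_, ?_⟩, (hOf p) * (hOf p + 1) / 2 - p.1, ?_, ?_⟩
    · have := abs_le.mp h1; omega
    · have := abs_le.mp h1; omega
    · -- G bounds
      have e := hh2 (hOf p)
      have hg : gOf p = 2 * ((hOf p) * (hOf p + 1) / 2 - p.1) := by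
        simp only [hOf] at e ⊢
        simp only [gOf]
        have e2 : (p.1 - p.2) * (p.1 - p.2 + 1) = (p.1 - p.2)^2 + (p.1 - p.2) := by ring
        rw [e2] at e
        omega
      simp only [glo, ghi]
      constructor
      · omega
      · omega
    · -- psi h G = p
      simp only [psi, Prod.ext_iff]
      constructor
      · ring
      · simp only [hOf]; ring
  · rintro ⟨h, ⟨hl, hr⟩, G, ⟨hGl, hGr⟩, rfl⟩
    rw [psi_hOf, psi_gOf]
    refine ⟨by rw [abs_le]; omega, ?_, ?_⟩
    · simp only [ghi] at hGr; omega
    · simp only [glo] at hGl; omega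

lemma glo_nonpos {r : ℕ} {h : ℤ} (hh : |h| ≤ (r:ℤ)) : glo r h ≤ 0 := by
  have h1 : (0:ℤ) ≤ ((r : ℤ) - |h|) / 2 := by omega
  have h2 := tri_nonneg h1
  have h3 : (0:ℤ) ≤ |h| * (((r : ℤ) - |h|) / 2) := mul_nonneg (abs_nonneg h) h1
  simp only [glo]; omega

lemma ghi_nonneg {r : ℕ} {h : ℤ} (hh : |h| ≤ (r:ℤ)) : 0 ≤ ghi r h := by
  have h1 : (0:ℤ) ≤ ((r : ℤ) + |h|) / 2 := by have := abs_nonneg h; omega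
  exact tri_nonneg h1

lemma card_Fs (r : ℕ) : ((Fs r).card : ℤ) = ∑ h ∈ Finset.Icc (-(r : ℤ)) (r : ℤ), row r h := by
  have hdis : ∀ h1 ∈ Finset.Icc (-(r : ℤ)) (r : ℤ), ∀ h2 ∈ Finset.Icc (-(r : ℤ)) (r : ℤ),
      h1 ≠ h2 → Disjoint ((Finset.Icc (glo r h1) (ghi r h1)).image (psi h1))
        ((Finset.Icc (glo r h2) (ghi r h2)).image (psi h2)) := by
    intro h1 _ h2 _ hne
    rw [Finset.disjoint_left]
    rintro p hp1 hp2
    rw [Finset.mem_image] at hp1 hp2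
    obtain ⟨G1, _, he1⟩ := hp1
    obtain ⟨G2, _, he2⟩ := hp2
    apply hne
    rw [← psi_hOf h1 G1, he1, ← he2, psi_hOf]
  rw [Fs, Finset.card_biUnion hdis]
  push_cast
  apply Finset.sum_congr rfl
  intro h hh
  rw [Finset.card_image_of_injective _ (psi_inj h), Int.card_Icc]
  rw [Finset.mem_Icc] at hh
  have hab : |h| ≤ (r:ℤ) := by rw [abs_le]; omega
  have := glo_nonpos hab
  have := ghi_nonneg hab
  rw [Int.toNat_of_nonneg (by omega)]
  simp only [row]; ring

lemma sum_peel (f : ℤ → ℤ) (r : ℕ) :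
    ∑ h ∈ Finset.Icc (-((r : ℤ)+1)) ((r : ℤ)+1), f h
      = f (-((r : ℤ)+1)) + f ((r : ℤ)+1) + ∑ h ∈ Finset.Icc (-(r : ℤ)) (r : ℤ), f h := by
  have hset : Finset.Icc (-((r : ℤ)+1)) ((r : ℤ)+1)
      = insert (-((r : ℤ)+1)) (insert ((r : ℤ)+1) (Finset.Icc (-(r : ℤ)) (r : ℤ))) := by
    ext x
    simp only [Finset.mem_Icc, Finset.mem_insert]
    omega
  rw [hset, Finset.sum_insert, Finset.sum_insert]
  · ring
  · simp only [Finset.mem_Icc]; omega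
  · simp only [Finset.mem_insert, Finset.mem_Icc]; omega

lemma sum_const_icc (r : ℕ) (c : ℤ) : ∑ _h ∈ Finset.Icc (-(r : ℤ)) (r : ℤ), c = (2*(r:ℤ)+1) * c := by
  rw [Finset.sum_const, Int.card_Icc]
  have : ((r:ℤ) + 1 - -(r:ℤ)) = 2*(r:ℤ)+1 := by ring
  rw [this]
  rw [nsmul_eq_mul, Int.toNat_of_nonneg (by positivity)]

lemma sum_abs (r : ℕ) : ∑ h ∈ Finset.Icc (-(r : ℤ)) (r : ℤ), |h| = (r:ℤ)*((r:ℤ)+1) := by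
  induction r with
  | zero => simp
  | succ n ih =>
    have hc : ((n + 1 : ℕ) : ℤ) = (n : ℤ) + 1 := by push_cast; ring
    rw [hc, sum_peel (fun h => |h|) n, ih]
    rw [abs_neg, abs_of_nonneg (by positivity : (0:ℤ) ≤ (n:ℤ)+1)]
    ring


lemma sum_mod (r : ℕ) : ∑ h ∈ Finset.Icc (-(r : ℤ)) (r : ℤ), (((r:ℤ) + |h|) % 2) = (r:ℤ) := by
  induction r with
  | zero => simp
  | succ n ih =>
    have hc : ((n + 1 : ℕ) : ℤ) = (n : ℤ) + 1 := by push_cast; ring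
    rw [hc, sum_peel (fun h => (((n:ℤ)+1 + |h|) % 2)) n]
    have e1 : |(-((n:ℤ)+1))| = (n:ℤ)+1 := by rw [abs_neg, abs_of_nonneg (by positivity)]
    have e2 : |((n:ℤ)+1)| = (n:ℤ)+1 := abs_of_nonneg (by positivity)
    rw [e1, e2]
    have e3 : (((n:ℤ)+1) + ((n:ℤ)+1)) % 2 = 0 := by omega
    rw [e3]
    have e4 : ∀ h ∈ Finset.Icc (-(n : ℤ)) (n : ℤ),
        (((n:ℤ)+1 + |h|) % 2) = 1 - (((n:ℤ) + |h|) % 2) := by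
      intro h _; omega
    rw [Finset.sum_congr rfl e4, Finset.sum_sub_distrib, sum_const_icc, ih]
    ring

lemma row_diff {r : ℕ} {h : ℤ} (hh : |h| ≤ (r:ℤ)) :
    row (r+2) h = row r h + ((r:ℤ) + 2 + |h| - ((r:ℤ) + |h|) % 2) := by
  have hc : ((r + 2 : ℕ) : ℤ) = (r : ℤ) + 2 := by push_cast; ring
  have ha : (0:ℤ) ≤ |h| := abs_nonneg h
  simp only [row, ghi, glo, hc]
  have e1 : ((r:ℤ) + 2 + |h|) / 2 = ((r:ℤ) + |h|) / 2 + 1 := by omega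
  have e2 : ((r:ℤ) + 2 - |h|) / 2 = ((r:ℤ) - |h|) / 2 + 1 := by omega
  rw [e1, e2, tri_succ (((r:ℤ) + |h|) / 2), tri_succ (((r:ℤ) - |h|) / 2)]
  have e3 : |h| * (((r:ℤ) - |h|) / 2 + 1) = |h| * (((r:ℤ) - |h|) / 2) + |h| := by ring
  rw [e3]
  omega

lemma row_edge1 (r : ℕ) : row (r+2) ((r:ℤ)+1) = tri ((r:ℤ)+1) + 1 := by
  have hc : ((r + 2 : ℕ) : ℤ) = (r : ℤ) + 2 := by push_cast; ring
  simp only [row, ghi, glo, hc]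
  rw [abs_of_nonneg (by positivity : (0:ℤ) ≤ (r:ℤ)+1)]
  have e1 : ((r:ℤ) + 2 + ((r:ℤ)+1)) / 2 = (r:ℤ)+1 := by omega
  have e2 : ((r:ℤ) + 2 - ((r:ℤ)+1)) / 2 = 0 := by omega
  rw [e1, e2, tri_zero]
  ring

lemma row_edge2 (r : ℕ) : row (r+2) ((r:ℤ)+2) = tri ((r:ℤ)+2) + 1 := by
  have hc : ((r + 2 : ℕ) : ℤ) = (r : ℤ) + 2 := by push_cast; ring
  simp only [row, ghi, glo, hc]
  rw [abs_of_nonneg (by positivity : (0:ℤ) ≤ (r:ℤ)+2)]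
  have e1 : ((r:ℤ) + 2 + ((r:ℤ)+2)) / 2 = (r:ℤ)+2 := by omega
  have e2 : ((r:ℤ) + 2 - ((r:ℤ)+2)) / 2 = 0 := by omega
  rw [e1, e2, tri_zero]
  ring

lemma row_neg (r : ℕ) (h : ℤ) : row r (-h) = row r h := by
  simp only [row, ghi, glo, abs_neg]

noncomputable def S (r : ℕ) : ℤ := ∑ h ∈ Finset.Icc (-(r : ℤ)) (r : ℤ), row r h

lemma S_zero : S 0 = 1 := by
  simp only [S]
  norm_num
  simp only [row, ghi, glo]
  norm_num [tri_zero]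

lemma tri_one : tri 1 = 1 := by simp [tri]

lemma S_one : S 1 = 5 := by
  simp only [S]
  have hc : ((1 : ℕ) : ℤ) = ((0:ℕ) : ℤ) + 1 := by norm_num
  rw [hc, sum_peel (row 1) 0]
  norm_num
  have h1 : row 1 (1:ℤ) = 2 := by
    simp only [row, ghi, glo]
    rw [abs_one]
    norm_num [tri_one, tri_zero]
  have hm : row 1 (-1:ℤ) = 2 := by
    rw [show (-1:ℤ) = -(1:ℤ) by ring, row_neg]; exact h1
  have h0 : row 1 (0:ℤ) = 1 := by
    simp only [row, ghi, glo]
    norm_num [tri_zero]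
  rw [h1, hm, h0]
  norm_num

lemma S_step (r : ℕ) : S (r+2) = S r + (2*(r:ℤ)+1)*((r:ℤ)+2) + (r:ℤ)*((r:ℤ)+1) - (r:ℤ)
    + 2*(tri ((r:ℤ)+1) + 1) + 2*(tri ((r:ℤ)+2) + 1) := by
  have hc2 : ((r + 2 : ℕ) : ℤ) = ((r + 1 : ℕ) : ℤ) + 1 := by push_cast; ring
  have hc1 : ((r + 1 : ℕ) : ℤ) = (r:ℤ) + 1 := by push_cast; ring
  have step1 : S (r+2) = row (r+2) (-((r:ℤ)+1+1)) + row (r+2) ((r:ℤ)+1+1)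
      + (row (r+2) (-((r:ℤ)+1)) + row (r+2) ((r:ℤ)+1)
      + ∑ h ∈ Finset.Icc (-(r : ℤ)) (r : ℤ), row (r+2) h) := by
    rw [S, hc2, sum_peel (row (r+2)) (r+1), hc1, sum_peel (row (r+2)) r]
  rw [step1, row_neg, row_neg]
  have e1 : (r:ℤ)+1+1 = (r:ℤ)+2 := by ring
  rw [e1, row_edge1, row_edge2]
  have e4 : ∀ h ∈ Finset.Icc (-(r : ℤ)) (r : ℤ),
      row (r+2) h = row r h + ((r:ℤ) + 2 + |h| - ((r:ℤ) + |h|) % 2) := by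
    intro h hh
    rw [Finset.mem_Icc] at hh
    exact row_diff (by rw [abs_le]; omega)
  rw [Finset.sum_congr rfl e4, Finset.sum_add_distrib]
  have e5 : ∑ h ∈ Finset.Icc (-(r : ℤ)) (r : ℤ), ((r:ℤ) + 2 + |h| - ((r:ℤ) + |h|) % 2)
      = (2*(r:ℤ)+1)*((r:ℤ)+2) + (r:ℤ)*((r:ℤ)+1) - (r:ℤ) := by
    have : ∀ h : ℤ, (r:ℤ) + 2 + |h| - ((r:ℤ) + |h|) % 2
        = ((r:ℤ) + 2) + (|h| - ((r:ℤ) + |h|) % 2) := by intro h; ring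
    calc ∑ h ∈ Finset.Icc (-(r : ℤ)) (r : ℤ), ((r:ℤ) + 2 + |h| - ((r:ℤ) + |h|) % 2)
        = (∑ _h ∈ Finset.Icc (-(r : ℤ)) (r : ℤ), ((r:ℤ)+2))
          + ((∑ h ∈ Finset.Icc (-(r : ℤ)) (r : ℤ), |h|)
          - ∑ h ∈ Finset.Icc (-(r : ℤ)) (r : ℤ), (((r:ℤ) + |h|) % 2)) := by
          rw [← Finset.sum_sub_distrib, ← Finset.sum_add_distrib]
          exact Finset.sum_congr rfl (fun h _ => this h)
      _ = (2*(r:ℤ)+1)*((r:ℤ)+2) + ((r:ℤ)*((r:ℤ)+1) - (r:ℤ)) := by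
          rw [sum_const_icc, sum_abs, sum_mod]
    ring
  rw [e5, ← S]
  ring

lemma S_formula (r : ℕ) : 12 * S r = 10 * (r:ℤ)^3 + 9 * (r:ℤ)^2 + 23 * (r:ℤ)
    + 6 * (((r + 1) / 2 : ℕ) : ℤ) + 12 := by
  induction r using Nat.twoStepInduction with
  | zero => rw [S_zero]; norm_num
  | one => rw [S_one]; norm_num
  | more n ih _ =>
    have hc : ((n + 2 : ℕ) : ℤ) = (n:ℤ) + 2 := by push_cast; ring
    have hd : (((n + 2 + 1) / 2 : ℕ) : ℤ) = (((n + 1) / 2 : ℕ) : ℤ) + 1 := by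
      have : (n + 2 + 1) / 2 = (n + 1) / 2 + 1 := by omega
      rw [this]; push_cast; ring
    rw [S_step, hc, hd]
    have t1 := two_tri ((n:ℤ)+1)
    have t2 := two_tri ((n:ℤ)+2)
    nlinarith [ih, t1, t2]

end PTC

theorem ball_cardinality (r : ℕ) :
    12 * ({X : ℤ × ℤ | dpc (0, 0) X ≤ r}.ncard : ℤ) =
      10 * (r : ℤ)^3 + 9 * (r : ℤ)^2 + 23 * (r : ℤ) + 6 * (((r + 1) / 2 : ℕ) : ℤ) + 12 := by
  rw [PTC.ball_eq_cset, PTC.cset_eq_Fs, Set.ncard_coe_finset]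
  have hc : (((PTC.Fs r).card : ℕ) : ℤ) = PTC.S r := PTC.card_Fs r
  rw [hc]
  exact PTC.S_formula r
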